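/- Suppose α_n(t) solve the Schur flow on [0,∞) with |α_n(t)| < 1 and that γ_n := lim_{t→∞} Re(conj(α_n(t))·α_{n-1}(t)) exists for each n (with α_{-1} ≡ -1). Then the sequence γ_n is nondecreasing: γ_n ≤ γ_{n+1} for all n ≥ 0, and -1 ≤ γ_n ≤ 1. -/

import Mathlib

open Complex

theorem stmt15 (α : ℤ → ℝ → ℂ) (γ : ℤ → ℝ)
    (hneg : ∀ t, α (-1) t = -1)
    (hmem : ∀ n : ℤ, 0 ≤ n → ∀ t : ℝ, 0 ≤ t → ‖α n t‖ < 1)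
    (hflow : ∀ n : ℤ, 0 ≤ n → ∀ t : ℝ, 0 ≤ t →
      HasDerivAt (α n) ((1 - ‖α n t‖ ^ 2) * (α (n + 1) t - α (n - 1) t)) t)
    (hγ : ∀ n : ℤ, 0 ≤ n →
      Filter.Tendsto (fun t => ((starRingEnd ℂ) (α n t) * α (n - 1) t).re)
        Filter.atTop (nhds (γ n))) :
    ∀ n : ℤ, 0 ≤ n → γ n ≤ γ (n + 1) ∧ -1 ≤ γ n ∧ γ n ≤ 1 := by
  have hfbound : ∀ m : ℤ, 0 ≤ m → ∀ t : ℝ, 0 ≤ t →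
      |((starRingEnd ℂ) (α m t) * α (m - 1) t).re| ≤ 1 := by
    intro m hm t ht
    have h1 : ‖α m t‖ ≤ 1 := (hmem m hm t ht).le
    have h2 : ‖α (m - 1) t‖ ≤ 1 := by
      rcases eq_or_lt_of_le hm with h | h
      · rw [← h]; norm_num [hneg]
      · exact (hmem (m - 1) (by omega) t ht).le
    calc |((starRingEnd ℂ) (α m t) * α (m - 1) t).re|
        ≤ ‖(starRingEnd ℂ) (α m t) * α (m - 1) t‖ := Complex.abs_re_le_norm _
      _ = ‖α m t‖ * ‖α (m - 1) t‖ := by rw [norm_mul, RCLike.norm_conj]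
      _ ≤ 1 := mul_le_one₀ h1 (norm_nonneg _) h2
  have hbound : ∀ m : ℤ, 0 ≤ m → -1 ≤ γ m ∧ γ m ≤ 1 := by
    intro m hm
    constructor
    · refine ge_of_tendsto (hγ m hm) ?_
      filter_upwards [Filter.eventually_ge_atTop (0:ℝ)] with t ht
      exact neg_le_of_abs_le (hfbound m hm t ht)
    · refine le_of_tendsto (hγ m hm) ?_
      filter_upwards [Filter.eventually_ge_atTop (0:ℝ)] with t ht
      exact le_of_abs_le (hfbound m hm t ht)
  intro n hn
  refine ⟨?_, hbound n hn⟩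
  by_contra hlt
  push_neg at hlt
  set δ : ℝ := (γ n - γ (n + 1)) / 2 with hδ
  have hδpos : 0 < δ := by simp [hδ]; linarith
  -- f k t
  set f : ℤ → ℝ → ℝ := fun k t => ((starRingEnd ℂ) (α k t) * α (k - 1) t).re with hfdef
  -- eventually f n t - f (n+1) t ≥ δ
  have htend : Filter.Tendsto (fun t => f n t - f (n + 1) t) Filter.atTop
      (nhds (γ n - γ (n + 1))) := (hγ n hn).sub (hγ (n + 1) (by omega))
  have hev : ∀ᶠ t in Filter.atTop, δ ≤ f n t - f (n + 1) t := by
    refine htend.eventually (eventually_ge_nhds ?_)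
    linarith
  obtain ⟨T0, hT0⟩ := Filter.eventually_atTop.1 hev
  set T : ℝ := max T0 0 with hT
  have hTnonneg : (0:ℝ) ≤ T := le_max_right _ _
  -- g
  set g : ℝ → ℝ := fun t => 1 - ‖α n t‖ ^ 2 with hgdef
  have hgpos : ∀ t : ℝ, 0 ≤ t → 0 < g t := by
    intro t ht
    have := hmem n hn t ht
    have h0 : ‖α n t‖ ^ 2 < 1 := by nlinarith [norm_nonneg (α n t)]
    show 0 < 1 - ‖α n t‖ ^ 2
    linarith
  have hgle : ∀ t : ℝ, g t ≤ 1 := by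
    intro t
    have := sq_nonneg ‖α n t‖
    show 1 - ‖α n t‖ ^ 2 ≤ 1
    linarith
  -- derivative of g
  have hgderiv : ∀ t : ℝ, 0 ≤ t →
      HasDerivAt g (2 * g t * (f n t - f (n + 1) t)) t := by
    intro t ht
    have hu := hflow n hn t ht
    have hc : HasDerivAt (fun s => (starRingEnd ℂ) (α n s))
        ((starRingEnd ℂ) ((1 - ‖α n t‖ ^ 2) * (α (n + 1) t - α (n - 1) t))) t := by
      simpa using hu.star
    have hmul := hc.mul hu
    have hre := Complex.reCLM.hasFDerivAt.comp_hasDerivAt t hmul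
    have hq : HasDerivAt (fun s => ((starRingEnd ℂ) (α n s) * α n s).re)
        (((starRingEnd ℂ) ((1 - ‖α n t‖ ^ 2) * (α (n + 1) t - α (n - 1) t)) * α n t
          + (starRingEnd ℂ) (α n t) * ((1 - ‖α n t‖ ^ 2) * (α (n + 1) t - α (n - 1) t))).re) t := hre
    have hqg : ∀ s : ℝ, g s = 1 - ((starRingEnd ℂ) (α n s) * α n s).re := by
      intro s
      simp [hgdef, Complex.mul_re, Complex.conj_re, Complex.conj_im,
        Complex.sq_norm, Complex.normSq_apply]
    have hg' : HasDerivAt g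
        (-(((starRingEnd ℂ) ((1 - ‖α n t‖ ^ 2) * (α (n + 1) t - α (n - 1) t)) * α n t
          + (starRingEnd ℂ) (α n t) * ((1 - ‖α n t‖ ^ 2) * (α (n + 1) t - α (n - 1) t))).re)) t := by
      have h : HasDerivAt (fun s => 1 - ((starRingEnd ℂ) (α n s) * α n s).re)
          (0 - (((starRingEnd ℂ) ((1 - ‖α n t‖ ^ 2) * (α (n + 1) t - α (n - 1) t)) * α n t
            + (starRingEnd ℂ) (α n t) * ((1 - ‖α n t‖ ^ 2) * (α (n + 1) t - α (n - 1) t))).re)) t :=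
        (hasDerivAt_const t (1:ℝ)).sub hq
      have hgeq : g = fun s => 1 - ((starRingEnd ℂ) (α n s) * α n s).re := funext hqg
      rw [hgeq]
      convert h using 1
      ring
    convert hg' using 1
    have hn1 : (n + 1 - 1 : ℤ) = n := by ring
    simp only [hfdef, hgdef, hn1]
    simp [Complex.mul_re, Complex.mul_im, Complex.add_re, Complex.sub_re, Complex.sub_im,
      Complex.conj_re, Complex.conj_im, Complex.one_re, Complex.one_im,
      Complex.ofReal_re, Complex.ofReal_im, ← Complex.ofReal_pow,
      Complex.sq_norm, Complex.normSq_apply]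
    ring
  -- ψ
  set ψ : ℝ → ℝ := fun t => Real.log (g t) - 2 * δ * t with hψdef
  have hψderiv : ∀ t : ℝ, 0 ≤ t →
      HasDerivAt ψ (2 * (f n t - f (n + 1) t) - 2 * δ) t := by
    intro t ht
    have hgne : g t ≠ 0 := (hgpos t ht).ne'
    have hlog := (hgderiv t ht).log hgne
    have h2 := hlog.sub (((hasDerivAt_id t).const_mul (2 * δ)))
    refine h2.congr_deriv ?_
    field_simp
  have hmono : MonotoneOn ψ (Set.Ici T) := by
    refine monotoneOn_of_deriv_nonneg (convex_Ici T) ?_ ?_ ?_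
    · intro t ht
      exact (hψderiv t (le_trans hTnonneg ht)).continuousAt.continuousWithinAt
    · intro t ht
      rw [interior_Ici] at ht
      exact (hψderiv t (le_trans hTnonneg ht.le)).differentiableAt.differentiableWithinAt
    · intro t ht
      rw [interior_Ici] at ht
      have h0 : (0:ℝ) ≤ t := le_trans hTnonneg ht.le
      rw [(hψderiv t h0).deriv]
      have := hT0 t (le_trans (le_max_left _ _) ht.le)
      linarith
  -- contradiction
  have key : ∀ t : ℝ, T ≤ t → 2 * δ * (t - T) ≤ -Real.log (g T) := by
    intro t ht
    have h1 := hmono Set.self_mem_Ici (Set.mem_Ici.2 ht) ht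
    have h2 : Real.log (g t) ≤ 0 :=
      Real.log_nonpos (hgpos t (le_trans hTnonneg ht)).le (hgle t)
    simp only [hψdef] at h1
    linarith
  have hlogT : Real.log (g T) ≤ 0 := Real.log_nonpos (hgpos T hTnonneg).le (hgle T)
  set t1 : ℝ := T + (1 - Real.log (g T)) / (2 * δ) with ht1
  have hfrac : 0 ≤ (1 - Real.log (g T)) / (2 * δ) :=
    div_nonneg (by linarith) (by linarith)
  have hcalc : 2 * δ * (t1 - T) = 1 - Real.log (g T) := by
    rw [ht1]; field_simp; ring
  have hkey := key t1 (by rw [ht1]; linarith)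
  rw [hcalc] at hkey
  linarith
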